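/- Let R be a commutative ring such that the normal closure Ê_2(R) of E_2(R) in SL_2(R) is given. The map ρ: SL_2(R) → Um_2(R) sending a matrix to its first row induces a bijection SL_2(R)/Ê_2(R) → Um_2(R)/Ê_2(R). -/

import Mathlib

/-- `SL₂(R)`. -/
abbrev SL2 (R : Type) [CommRing R] := Matrix.SpecialLinearGroup (Fin 2) R

/-- `Ê₂(R)`, the normal closure of the elementary subgroup `E₂(R)` in `SL₂(R)`. -/
def E2hat (R : Type) [CommRing R] : Subgroup (SL2 R) :=
  Subgroup.normalClosure
    {A | ∃ (i j : Fin 2) (r : R), i ≠ j ∧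
      (A : Matrix (Fin 2) (Fin 2) R) = 1 + Matrix.single i j r}

/-- `Um₂(R)`, the set of unimodular rows of length 2. -/
def Um2 (R : Type) [CommRing R] := {v : Fin 2 → R // Ideal.span (Set.range v) = ⊤}

/-- The right `Ê₂(R)`-orbit relation on `Um₂(R)`. -/
def um2Rel (R : Type) [CommRing R] (v w : Um2 R) : Prop :=
  ∃ E ∈ E2hat R, Matrix.vecMul v.1 (E : Matrix (Fin 2) (Fin 2) R) = w.1

section aux
variable {R : Type} [CommRing R]

variable {R : Type} [CommRing R]

lemma row0_mul (M N : Matrix (Fin 2) (Fin 2) R) :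
    (fun j => (M * N) 0 j) = Matrix.vecMul (fun j => M 0 j) N := by
  funext j
  simp [Matrix.mul_apply, Matrix.vecMul, dotProduct]

lemma row0_unimodular (A : SL2 R) :
    Ideal.span (Set.range fun j => (A : Matrix (Fin 2) (Fin 2) R) 0 j) = ⊤ := by
  rw [Ideal.eq_top_iff_one]
  have hdet : (A : Matrix (Fin 2) (Fin 2) R).det = 1 := A.2
  rw [Matrix.det_fin_two] at hdet
  have h0 : (A : Matrix (Fin 2) (Fin 2) R) 0 0 ∈
      Ideal.span (Set.range fun j => (A : Matrix (Fin 2) (Fin 2) R) 0 j) :=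
    Ideal.subset_span ⟨0, rfl⟩
  have h1 : (A : Matrix (Fin 2) (Fin 2) R) 0 1 ∈
      Ideal.span (Set.range fun j => (A : Matrix (Fin 2) (Fin 2) R) 0 j) :=
    Ideal.subset_span ⟨1, rfl⟩
  have : (1 : R) = (A : Matrix (Fin 2) (Fin 2) R) 1 1 * (A : Matrix (Fin 2) (Fin 2) R) 0 0
      + (-(A : Matrix (Fin 2) (Fin 2) R) 1 0) * (A : Matrix (Fin 2) (Fin 2) R) 0 1 := by
    linear_combination -hdet
  have hmem := add_mem (Ideal.mul_mem_left _ ((A : Matrix (Fin 2) (Fin 2) R) 1 1) h0)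
    (Ideal.mul_mem_left _ (-(A : Matrix (Fin 2) (Fin 2) R) 1 0) h1)
  rwa [← this] at hmem

lemma lower_mem (L : SL2 R) (h00 : (L : Matrix (Fin 2) (Fin 2) R) 0 0 = 1)
    (h01 : (L : Matrix (Fin 2) (Fin 2) R) 0 1 = 0) : L ∈ E2hat R := by
  apply Subgroup.subset_normalClosure
  refine ⟨1, 0, (L : Matrix (Fin 2) (Fin 2) R) 1 0, by decide, ?_⟩
  have hdet : (L : Matrix (Fin 2) (Fin 2) R).det = 1 := L.2
  rw [Matrix.det_fin_two, h00, h01] at hdet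
  have h11 : (L : Matrix (Fin 2) (Fin 2) R) 1 1 = 1 := by linear_combination hdet
  ext i j
  fin_cases i <;> fin_cases j <;>
    simp [h00, h01, h11, Matrix.single, Matrix.one_apply]

lemma um2Rel_equiv : Equivalence (um2Rel R) := by
  constructor
  · intro v
    exact ⟨1, one_mem _, by simp⟩
  · rintro v w ⟨E, hE, hvw⟩
    refine ⟨E⁻¹, inv_mem hE, ?_⟩
    rw [← hvw, Matrix.vecMul_vecMul, ← Matrix.SpecialLinearGroup.coe_mul,
      mul_inv_cancel]
    simp
  · rintro u v w ⟨E, hE, h1⟩ ⟨F, hF, h2⟩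
    refine ⟨E * F, mul_mem hE hF, ?_⟩
    rw [Matrix.SpecialLinearGroup.coe_mul, ← Matrix.vecMul_vecMul, h1, h2]

end aux

/-- The first-row map `ρ : SL₂(R) → Um₂(R)` induces a bijection
`SL₂(R)/Ê₂(R) → Um₂(R)/Ê₂(R)`. -/
theorem stmt_8 (R : Type) [CommRing R] :
    ∃ h : ∀ A : SL2 R,
        Ideal.span (Set.range fun j => (A : Matrix (Fin 2) (Fin 2) R) 0 j) = ⊤,
      ∃ f : (SL2 R ⧸ E2hat R) → Quot (um2Rel R),
        Function.Bijective f ∧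
          ∀ A : SL2 R,
            f (QuotientGroup.mk A) =
              Quot.mk (um2Rel R) ⟨fun j => (A : Matrix (Fin 2) (Fin 2) R) 0 j, h A⟩ := by
  refine ⟨row0_unimodular, ?_⟩
  set g : SL2 R → Quot (um2Rel R) :=
    fun A => Quot.mk (um2Rel R) ⟨fun j => (A : Matrix (Fin 2) (Fin 2) R) 0 j,
      row0_unimodular A⟩ with hg_def
  have key : ∀ A B : SL2 R, um2Rel R ⟨_, row0_unimodular A⟩ ⟨_, row0_unimodular B⟩ →
      (QuotientGroup.mk A : SL2 R ⧸ E2hat R) = QuotientGroup.mk B := by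
    rintro A B ⟨E, hE, hrow⟩
    set L : SL2 R := A * E * B⁻¹ with hL
    have hLrow : (fun j => (L : Matrix (Fin 2) (Fin 2) R) 0 j)
        = fun j => ((1 : Matrix (Fin 2) (Fin 2) R)) 0 j := by
      have : (L : Matrix (Fin 2) (Fin 2) R) =
          ((A : Matrix (Fin 2) (Fin 2) R) * (E : Matrix (Fin 2) (Fin 2) R)) *
            ((B⁻¹ : SL2 R) : Matrix (Fin 2) (Fin 2) R) := by
        simp [hL, Matrix.SpecialLinearGroup.coe_mul, mul_assoc]
      rw [this, row0_mul, row0_mul, hrow, ← row0_mul, ← Matrix.SpecialLinearGroup.coe_mul,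
        mul_inv_cancel, Matrix.SpecialLinearGroup.coe_one]
    have h00 : (L : Matrix (Fin 2) (Fin 2) R) 0 0 = 1 := by
      have := congrFun hLrow 0; simpa using this
    have h01 : (L : Matrix (Fin 2) (Fin 2) R) 0 1 = 0 := by
      have := congrFun hLrow 1; simpa using this
    have hLmem : L ∈ E2hat R := lower_mem L h00 h01
    rw [QuotientGroup.eq]
    have heq : A⁻¹ * B = E * (B⁻¹ * L⁻¹ * B) := by
      rw [hL]; group
    rw [heq]
    have hnormal : (E2hat R).Normal := Subgroup.normalClosure_normal
    exact mul_mem hE (by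
      have := hnormal.conj_mem L⁻¹ (inv_mem hLmem) B⁻¹
      simpa using this)
  have hg : ∀ a b : SL2 R, QuotientGroup.leftRel (E2hat R) a b → g a = g b := by
    intro a b hab
    rw [QuotientGroup.leftRel_apply] at hab
    apply Quot.sound
    refine ⟨a⁻¹ * b, hab, ?_⟩
    rw [← row0_mul, ← Matrix.SpecialLinearGroup.coe_mul]
    group
  refine ⟨fun q => Quotient.liftOn' q g hg, ⟨?_, ?_⟩, fun A => rfl⟩
  · intro q1 q2
    induction q1 using Quotient.inductionOn'
    induction q2 using Quotient.inductionOn'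
    rename_i A B
    intro hfeq
    have : g A = g B := hfeq
    have hexact := Quot.eqvGen_exact this
    replace hexact := (Equivalence.eqvGen_iff (um2Rel_equiv (R := R))).mp hexact
    exact key A B hexact
  · intro q
    induction q using Quot.inductionOn
    rename_i v
    obtain ⟨v, hv⟩ := v
    have h1 : (1 : R) ∈ Ideal.span {v 0, v 1} := by
      have : Set.range v = {v 0, v 1} := by
        ext x
        simp [Fin.exists_fin_two, eq_comm]
      rw [← this, hv]; trivial
    rw [Ideal.mem_span_pair] at h1
    obtain ⟨x, y, hxy⟩ := h1
    have hdet : (!![v 0, v 1; -y, x] : Matrix (Fin 2) (Fin 2) R).det = 1 := by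
      rw [Matrix.det_fin_two_of]; linear_combination hxy
    refine ⟨QuotientGroup.mk (⟨_, hdet⟩ : SL2 R), ?_⟩
    have hrow : (fun j => ((⟨_, hdet⟩ : SL2 R) : Matrix (Fin 2) (Fin 2) R) 0 j) = v := by
      funext j; fin_cases j <;> simp
    show Quot.mk (um2Rel R) ⟨_, row0_unimodular _⟩ = Quot.mk (um2Rel R) ⟨v, hv⟩
    exact congrArg _ (Subtype.ext hrow)
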